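/- There exists an absolute constant C > 0 such that for every M ≥ 0, every twice continuously differentiable compactly supported g : ℝ³ → ℝ³ with |g(x)| ≤ M for all x, and every continuously differentiable compactly supported v : ℝ³ → ℝ³, one has ∫_{ℝ³} |v|² |∇g|⁴ dx ≤ C M² ∫_{ℝ³} ( |∇g|² |∇v|² + |v|² |∇²g|² ) dx. -/

import Mathlib

open MeasureTheory

noncomputable section

/-- Euclidean three-space. -/
abbrev E3 := EuclideanSpace ℝ (Fin 3)

/-- The j-th partial derivative of a scalar function on ℝ³. -/
def pder (j : Fin 3) (f : E3 → ℝ) : E3 → ℝ :=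
  fun x => fderiv ℝ f x (EuclideanSpace.single j 1)

/-- |∇v|², the squared Euclidean norm of the gradient of v : ℝ³ → ℝ³. -/
def grad2 (v : E3 → E3) (x : E3) : ℝ :=
  ∑ i : Fin 3, ∑ j : Fin 3, (pder j (fun y => v y i) x) ^ 2

/-- |∇²v|², the squared norm of the second derivatives of v : ℝ³ → ℝ³. -/
def hess2 (v : E3 → E3) (x : E3) : ℝ :=
  ∑ i : Fin 3, ∑ j : Fin 3, ∑ k : Fin 3, (pder k (pder j (fun y => v y i)) x) ^ 2

/-- |∇³v|², the squared norm of the third derivatives of v : ℝ³ → ℝ³. -/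
def third2 (v : E3 → E3) (x : E3) : ℝ :=
  ∑ i : Fin 3, ∑ j : Fin 3, ∑ k : Fin 3, ∑ l : Fin 3,
    (pder l (pder k (pder j (fun y => v y i))) x) ^ 2

open Set

noncomputable section
-- pi-world lemma
lemma pi_integral_pder_eq_zero (j : Fin 3) (G : (Fin 3 → ℝ) → ℝ)
    (hG : ContDiff ℝ 1 G) (hcs : HasCompactSupport G) :
    ∫ y : Fin 3 → ℝ, fderiv ℝ G y (Pi.single j 1) = 0 := by
  obtain ⟨R, hR⟩ := hcs.isBounded.subset_closedBall 0
  set a : Fin 3 → ℝ := fun _ => -(|R| + 1) with ha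
  set b : Fin 3 → ℝ := fun _ => |R| + 1 with hb
  have hRR : R ≤ |R| := le_abs_self R
  have hout : ∀ y : Fin 3 → ℝ, y ∉ Icc a b → y ∉ tsupport G := by
    intro y hy hyt
    apply hy
    have : ‖y‖ ≤ R := by simpa using hR hyt
    constructor <;> intro i <;>
      have := (abs_le.1 ((norm_le_pi_norm y i).trans this)) <;>
      simp only [ha, hb] <;> [linarith [this.1]; linarith [this.2]]
  have key := MeasureTheory.integral_divergence_of_hasFDerivAt_off_countable' (n := 2)
    a b (by intro i; simp only [ha, hb]; linarith [abs_nonneg R])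
    (fun i x => if i = j then G x else 0)
    (fun i x => if i = j then fderiv ℝ G x else 0) ∅ Set.countable_empty
    (by
      intro i
      by_cases h : i = j <;> simp [h, hG.continuous.continuousOn, continuousOn_const])
    (by
      intro x _ i
      by_cases h : i = j
      · simpa [h] using (hG.differentiable (by simp) x).hasFDerivAt
      · simpa [h] using hasFDerivAt_const (0 : ℝ) x)
    (by
      apply Continuous.integrableOn_Icc
      have hc : Continuous (fun x => fderiv ℝ G x (Pi.single j 1)) :=
        (hG.continuous_fderiv (by simp)).clm_apply continuous_const
      have : (fun x => ∑ i : Fin 3,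
          (if i = j then fderiv ℝ G x else 0) (Pi.single i 1)) =
          fun x => fderiv ℝ G x (Pi.single j 1) := by
        funext x
        rw [Finset.sum_eq_single j] <;> simp +contextual
      rw [this]
      exact hc)
  have hsum : ∀ x, (∑ i : Fin 3, (if i = j then fderiv ℝ G x else 0) (Pi.single i 1))
      = fderiv ℝ G x (Pi.single j 1) := by
    intro x
    rw [Finset.sum_eq_single j] <;> simp +contextual
  rw [show (∫ y : Fin 3 → ℝ, fderiv ℝ G y (Pi.single j 1)) =
      ∫ y in Icc a b, ∑ i : Fin 3, (if i = j then fderiv ℝ G y else 0) (Pi.single i 1) by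
    simp_rw [hsum]
    exact (setIntegral_eq_integral_of_forall_compl_eq_zero (fun y hy => by
      have : fderiv ℝ G y = 0 := by
        by_contra h
        exact hout y hy (support_fderiv_subset ℝ (Function.mem_support.2 h))
      simp [this])).symm]
  rw [key]
  apply Finset.sum_eq_zero
  intro i _
  have hface : ∀ (c : ℝ), |c| = |R| + 1 →
      ∀ x : Fin 2 → ℝ, (if i = j then G (Fin.insertNth (α := fun _ : Fin 3 => ℝ) i c x) else 0) = 0 := by
    intro c hc x
    by_cases h : i = j
    · subst h
      simp only [if_true]
      apply image_eq_zero_of_notMem_tsupport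
      intro hmem
      have h1 : ‖Fin.insertNth (α := fun _ : Fin 3 => ℝ) i c x‖ ≤ R := by simpa using hR hmem
      have h2 : |c| ≤ ‖Fin.insertNth (α := fun _ : Fin 3 => ℝ) i c x‖ := by
        simpa [Fin.insertNth_apply_same] using norm_le_pi_norm (Fin.insertNth (α := fun _ : Fin 3 => ℝ) i c x) i
      have := h2.trans h1
      rw [hc] at this
      linarith [le_abs_self R]
    · simp [h]
  rw [show (∫ x in Icc (a ∘ i.succAbove) (b ∘ i.succAbove),
        (if i = j then G (Fin.insertNth (α := fun _ : Fin 3 => ℝ) i (b i) x) else 0)) = 0 by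
      apply integral_eq_zero_of_ae
      filter_upwards with x using hface (b i) (by simp only [hb]; rw [abs_of_nonneg (by positivity)]) x,
    show (∫ x in Icc (a ∘ i.succAbove) (b ∘ i.succAbove),
        (if i = j then G (Fin.insertNth (α := fun _ : Fin 3 => ℝ) i (a i) x) else 0)) = 0 by
      apply integral_eq_zero_of_ae
      filter_upwards with x using hface (a i) (by simp only [ha]; rw [abs_neg, abs_of_nonneg (by positivity)]) x]
  simp

end

noncomputable section
lemma integral_pder_eq_zero {F : E3 → ℝ} (hF : ContDiff ℝ 1 F)
    (hcs : HasCompactSupport F) (j : Fin 3) : ∫ x, pder j F x = 0 := by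
  have hvol := (EuclideanSpace.volume_preserving_symm_measurableEquiv_toLp (Fin 3)).symm
  set L : (Fin 3 → ℝ) ≃L[ℝ] E3 := (EuclideanSpace.equiv (Fin 3) ℝ).symm with hL
  have hcomp : ∫ x, pder j F x =
      ∫ y : Fin 3 → ℝ, pder j F ((MeasurableEquiv.toLp 2 (Fin 3 → ℝ)) y) :=
    (hvol.integral_comp (MeasurableEquiv.toLp 2 (Fin 3 → ℝ)).measurableEmbedding _).symm
  rw [hcomp]
  have hGG : ∀ y : Fin 3 → ℝ,
      pder j F ((MeasurableEquiv.toLp 2 (Fin 3 → ℝ)) y)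
        = fderiv ℝ (F ∘ L) y (Pi.single j 1) := by
    intro y
    have hd : HasFDerivAt F (fderiv ℝ F (L y)) (L y) :=
      (hF.differentiable (by simp) _).hasFDerivAt
    have h2 : HasFDerivAt (F ∘ L) ((fderiv ℝ F (L y)).comp (L : (Fin 3 → ℝ) →L[ℝ] E3)) y :=
      (L.comp_right_hasFDerivAt_iff).2 hd
    rw [h2.fderiv]
    rfl
  simp_rw [hGG]
  exact pi_integral_pder_eq_zero j (F ∘ L) (hF.comp L.contDiff)
    (hcs.comp_homeomorph L.toHomeomorph)
end

noncomputable section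
open Finset

lemma contDiff_pder {n : ℕ} {f : E3 → ℝ} (hf : ContDiff ℝ (n + 1) f) (j : Fin 3) :
    ContDiff ℝ n (pder j f) := by
  have h1 : ContDiff ℝ n (fderiv ℝ f) := hf.fderiv_right (by norm_cast)
  exact h1.clm_apply contDiff_const

lemma pder_mul {f h : E3 → ℝ} {x : E3} (j : Fin 3)
    (hf : DifferentiableAt ℝ f x) (hh : DifferentiableAt ℝ h x) :
    pder j (fun y => f y * h y) x = pder j f x * h x + f x * pder j h x := by
  simp only [pder]
  rw [fderiv_fun_mul hf hh]
  simp only [ContinuousLinearMap.add_apply, ContinuousLinearMap.smul_apply, smul_eq_mul]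
  ring

lemma pder_sum {ι : Type*} {s : Finset ι} {f : ι → E3 → ℝ} {x : E3} (j : Fin 3)
    (hf : ∀ i ∈ s, DifferentiableAt ℝ (f i) x) :
    pder j (fun y => ∑ i ∈ s, f i y) x = ∑ i ∈ s, pder j (f i) x := by
  simp only [pder]
  rw [fderiv_fun_sum hf]
  simp

lemma pder_sq {f : E3 → ℝ} {x : E3} (j : Fin 3) (hf : DifferentiableAt ℝ f x) :
    pder j (fun y => f y ^ 2) x = 2 * f x * pder j f x := by
  have : (fun y => f y ^ 2) = fun y => f y * f y := by funext y; ring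
  rw [this, pder_mul j hf hf]; ring

lemma pder_eq_zero_of_nmem {f : E3 → ℝ} {x : E3} (j : Fin 3) (hx : x ∉ tsupport f) :
    pder j f x = 0 := by
  have : fderiv ℝ f x = 0 := by
    by_contra h
    exact hx (support_fderiv_subset ℝ (Function.mem_support.2 h))
  simp [pder, this]

lemma norm_sq_eq (y : E3) : ‖y‖ ^ 2 = ∑ i : Fin 3, (y i) ^ 2 := by
  rw [EuclideanSpace.norm_eq, Real.sq_sqrt (by positivity)]
  simp [sq_abs]
end

noncomputable section
open Finset

/-- i-th component of g. -/
def gi (g : E3 → E3) (i : Fin 3) : E3 → ℝ := fun y => g y i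
def dg (g : E3 → E3) (i j : Fin 3) : E3 → ℝ := pder j (gi g i)
def ddg (g : E3 → E3) (i j k : Fin 3) : E3 → ℝ := pder k (dg g i j)
def N2 (v : E3 → E3) : E3 → ℝ := fun x => ∑ i : Fin 3, (v x i) ^ 2
def Qf (g : E3 → E3) (j : Fin 3) : E3 → ℝ := fun x => ∑ i : Fin 3, gi g i x * dg g i j x
def Pf (g v : E3 → E3) : E3 → ℝ := fun x => N2 v x * grad2 g x
def Ff (g v : E3 → E3) (j : Fin 3) : E3 → ℝ := fun x => Pf g v x * Qf g j x
def Sf (g : E3 → E3) : E3 → ℝ := fun x => ∑ j : Fin 3, ∑ i : Fin 3, gi g i x * ddg g i j j x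
def Df (g v : E3 → E3) : E3 → ℝ :=
  fun x => (∑ j : Fin 3, pder j (Pf g v) x * Qf g j x) + Pf g v x * Sf g x

lemma grad2_eq (g : E3 → E3) (x : E3) :
    grad2 g x = ∑ i : Fin 3, ∑ j : Fin 3, (dg g i j x) ^ 2 := rfl

lemma hess2_eq (g : E3 → E3) (x : E3) :
    hess2 g x = ∑ i : Fin 3, ∑ j : Fin 3, ∑ k : Fin 3, (ddg g i j k x) ^ 2 := rfl

lemma contDiff_coord {n : ℕ∞} {f : E3 → E3} (hf : ContDiff ℝ n f) (i : Fin 3) :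
    ContDiff ℝ n (fun y => f y i) := by
  have : (fun y => f y i) = fun y => (EuclideanSpace.proj (𝕜 := ℝ) i) (f y) := rfl
  rw [this]
  exact (EuclideanSpace.proj (𝕜 := ℝ) i).contDiff.comp hf

variable {g v : E3 → E3}

lemma contDiff_gi (hg : ContDiff ℝ 2 g) (i : Fin 3) : ContDiff ℝ 2 (gi g i) := contDiff_coord hg i

lemma contDiff_dg (hg : ContDiff ℝ 2 g) (i j : Fin 3) : ContDiff ℝ 1 (dg g i j) :=
  contDiff_pder (n := 1) (by exact_mod_cast contDiff_gi hg i) j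

lemma continuous_ddg (hg : ContDiff ℝ 2 g) (i j k : Fin 3) : Continuous (ddg g i j k) :=
  (contDiff_pder (n := 0) (by exact_mod_cast contDiff_dg hg i j) k).continuous

lemma contDiff_N2 (hv : ContDiff ℝ 1 v) : ContDiff ℝ 1 (N2 v) :=
  ContDiff.sum fun i _ => (contDiff_coord hv i).pow 2

lemma contDiff_grad2 (hg : ContDiff ℝ 2 g) : ContDiff ℝ 1 (grad2 g) :=
  ContDiff.sum fun i _ => ContDiff.sum fun j _ => (contDiff_dg hg i j).pow 2

lemma continuous_grad2v (hv : ContDiff ℝ 1 v) : Continuous (grad2 v) := by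
  apply continuous_finset_sum _ fun i _ => continuous_finset_sum _ fun j _ => ?_
  exact ((contDiff_pder (n := 0) (by exact_mod_cast contDiff_coord hv i) j).continuous).pow 2

lemma continuous_hess2 (hg : ContDiff ℝ 2 g) : Continuous (hess2 g) :=
  continuous_finset_sum _ fun i _ => continuous_finset_sum _ fun j _ =>
    continuous_finset_sum _ fun k _ => ((continuous_ddg hg i j k).pow 2)

lemma contDiff_Qf (hg : ContDiff ℝ 2 g) (j : Fin 3) : ContDiff ℝ 1 (Qf g j) :=
  ContDiff.sum fun i _ =>
    ((contDiff_gi hg i).of_le (by norm_num)).mul (contDiff_dg hg i j)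

lemma contDiff_Pf (hg : ContDiff ℝ 2 g) (hv : ContDiff ℝ 1 v) : ContDiff ℝ 1 (Pf g v) :=
  (contDiff_N2 hv).mul (contDiff_grad2 hg)

lemma contDiff_Ff (hg : ContDiff ℝ 2 g) (hv : ContDiff ℝ 1 v) (j : Fin 3) :
    ContDiff ℝ 1 (Ff g v j) :=
  (contDiff_Pf hg hv).mul (contDiff_Qf hg j)


lemma tsupport_pder_subset {f : E3 → ℝ} (j : Fin 3) : tsupport (pder j f) ⊆ tsupport f := by
  apply closure_minimal _ isClosed_closure
  intro x hx
  by_contra hmem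
  exact (Function.mem_support.1 hx) (pder_eq_zero_of_nmem j hmem)

lemma tsupport_gi_subset {g : E3 → E3} (i : Fin 3) : tsupport (gi g i) ⊆ tsupport g :=
  closure_mono fun x hx => Function.mem_support.2 fun h => (Function.mem_support.1 hx) (by
    simp [gi, h])

end

noncomputable section
open Finset

variable {g v : E3 → E3}

lemma pder_N2 (hv : ContDiff ℝ 1 v) (j : Fin 3) (x : E3) :
    pder j (N2 v) x = ∑ i : Fin 3, 2 * v x i * pder j (fun y => v y i) x := by
  have hdi : ∀ i ∈ Finset.univ, DifferentiableAt ℝ (fun y => (v y i) ^ 2) x := fun i _ =>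
    (((contDiff_coord hv i).pow 2).differentiable (by simp)) x
  rw [show pder j (N2 v) x = ∑ i : Fin 3, pder j (fun y => (v y i) ^ 2) x from
    pder_sum j hdi]
  exact Finset.sum_congr rfl fun i _ =>
    pder_sq j (((contDiff_coord hv i).differentiable (by simp)) x)

lemma pder_grad2 (hg : ContDiff ℝ 2 g) (j : Fin 3) (x : E3) :
    pder j (grad2 g) x = ∑ i : Fin 3, ∑ k : Fin 3, 2 * dg g i k x * ddg g i k j x := by
  have hin : ∀ (i : Fin 3), ∀ k ∈ Finset.univ, DifferentiableAt ℝ (fun y => (dg g i k y) ^ 2) x :=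
    fun i k _ => (((contDiff_dg hg i k).pow 2).differentiable (by simp)) x
  have hout : ∀ i ∈ Finset.univ, DifferentiableAt ℝ (fun y => ∑ k : Fin 3, (dg g i k y) ^ 2) x :=
    fun i _ => DifferentiableAt.fun_sum (hin i)
  rw [show pder j (grad2 g) x = ∑ i : Fin 3, pder j (fun y => ∑ k : Fin 3, (dg g i k y) ^ 2) x from
    pder_sum j hout]
  refine Finset.sum_congr rfl fun i _ => ?_
  rw [pder_sum j (hin i)]
  exact Finset.sum_congr rfl fun k _ =>
    pder_sq j (((contDiff_dg hg i k).differentiable (by simp)) x)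

lemma pder_Qf (hg : ContDiff ℝ 2 g) (j : Fin 3) (x : E3) :
    pder j (Qf g j) x = (∑ i : Fin 3, dg g i j x * dg g i j x)
      + ∑ i : Fin 3, gi g i x * ddg g i j j x := by
  have hdi : ∀ i ∈ Finset.univ, DifferentiableAt ℝ (fun y => gi g i y * dg g i j y) x :=
    fun i _ => ((((contDiff_gi hg i).of_le (by norm_num)).mul (contDiff_dg hg i j)).differentiable
      (by simp)) x
  rw [show pder j (Qf g j) x = ∑ i : Fin 3, pder j (fun y => gi g i y * dg g i j y) x from
    pder_sum j hdi]
  rw [show (∑ i : Fin 3, pder j (fun y => gi g i y * dg g i j y) x)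
      = ∑ i : Fin 3, (dg g i j x * dg g i j x + gi g i x * ddg g i j j x) from
    Finset.sum_congr rfl fun i _ => by
      rw [pder_mul j (((contDiff_gi hg i).of_le (by norm_num)).differentiable two_ne_zero x)
        ((contDiff_dg hg i j).differentiable (by simp) x)]
      rfl]
  exact Finset.sum_add_distrib

lemma pder_Pf (hg : ContDiff ℝ 2 g) (hv : ContDiff ℝ 1 v) (j : Fin 3) (x : E3) :
    pder j (Pf g v) x = pder j (N2 v) x * grad2 g x + N2 v x * pder j (grad2 g) x :=
  pder_mul j (((contDiff_N2 hv).differentiable (by simp)) x)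
    (((contDiff_grad2 hg).differentiable (by simp)) x)

lemma pder_Ff (hg : ContDiff ℝ 2 g) (hv : ContDiff ℝ 1 v) (j : Fin 3) (x : E3) :
    pder j (Ff g v j) x = pder j (Pf g v) x * Qf g j x + Pf g v x * pder j (Qf g j) x :=
  pder_mul j (((contDiff_Pf hg hv).differentiable (by simp)) x)
    (((contDiff_Qf hg j).differentiable (by simp)) x)

end

noncomputable section
open Finset

variable {g v : E3 → E3}

lemma key_identity (hg : ContDiff ℝ 2 g) (hv : ContDiff ℝ 1 v) (x : E3) :
    (∑ j : Fin 3, pder j (Ff g v j) x)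
      = N2 v x * (grad2 g x) ^ 2 + Df g v x := by
  have h1 : (∑ j : Fin 3, pder j (Ff g v j) x)
      = ∑ j : Fin 3, (pder j (Pf g v) x * Qf g j x
        + Pf g v x * ((∑ i : Fin 3, dg g i j x * dg g i j x)
          + ∑ i : Fin 3, gi g i x * ddg g i j j x)) := by
    refine Finset.sum_congr rfl fun j _ => ?_
    rw [pder_Ff hg hv j x, pder_Qf hg j x]
  rw [h1]
  have h2 : (∑ j : Fin 3, ∑ i : Fin 3, dg g i j x * dg g i j x) = grad2 g x := by
    rw [grad2_eq, Finset.sum_comm]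
    exact Finset.sum_congr rfl fun j _ => Finset.sum_congr rfl fun i _ => (sq (dg g j i x)).symm
  simp only [Finset.sum_add_distrib, ← Finset.mul_sum]
  rw [h2]
  simp only [Df, Sf, Pf]
  ring

lemma gi_eq_zero {x : E3} (hx : x ∉ tsupport g) (i : Fin 3) : gi g i x = 0 :=
  image_eq_zero_of_notMem_tsupport (fun h => hx (tsupport_gi_subset i h))

lemma dg_eq_zero {x : E3} (hx : x ∉ tsupport g) (i j : Fin 3) : dg g i j x = 0 :=
  pder_eq_zero_of_nmem j fun h => hx (tsupport_gi_subset i h)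

lemma grad2_eq_zero {x : E3} (hx : x ∉ tsupport g) : grad2 g x = 0 := by
  rw [grad2_eq]
  exact Finset.sum_eq_zero fun i _ => Finset.sum_eq_zero fun j _ => by
    rw [dg_eq_zero hx i j]; ring

lemma vi_eq_zero {x : E3} (hx : x ∉ tsupport v) (i : Fin 3) : v x i = 0 := by
  have : v x = 0 := image_eq_zero_of_notMem_tsupport hx
  rw [this]; rfl

lemma N2_eq_zero {x : E3} (hx : x ∉ tsupport v) : N2 v x = 0 :=
  Finset.sum_eq_zero fun i _ => by rw [vi_eq_zero hx i]; ring

end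

noncomputable section
open Finset

lemma young_ineq {x p q : ℝ} (hp : 0 ≤ p) (hq : 0 ≤ q) (h : x ^ 2 ≤ p * q) :
    -x ≤ p / 6 + (3 / 2) * q := by
  nlinarith [sq_nonneg (p / 6 - (3 / 2) * q), sq_nonneg (x + p / 6 + (3 / 2) * q)]

lemma cs1 (f h : Fin 3 → ℝ) :
    (∑ j : Fin 3, f j * h j) ^ 2 ≤ (∑ j : Fin 3, (f j) ^ 2) * ∑ j : Fin 3, (h j) ^ 2 :=
  Finset.sum_mul_sq_le_sq_mul_sq Finset.univ f h

lemma cs2 (f h : Fin 3 → Fin 3 → ℝ) :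
    (∑ i : Fin 3, ∑ k : Fin 3, f i k * h i k) ^ 2 ≤
      (∑ i : Fin 3, ∑ k : Fin 3, (f i k) ^ 2) * ∑ i : Fin 3, ∑ k : Fin 3, (h i k) ^ 2 := by
  have := Finset.sum_mul_sq_le_sq_mul_sq (Finset.univ : Finset (Fin 3 × Fin 3))
    (fun p => f p.1 p.2) (fun p => h p.1 p.2)
  simpa [Fintype.sum_prod_type] using this

variable {g v : E3 → E3}

lemma pointwise_bound (hg : ContDiff ℝ 2 g) (hv : ContDiff ℝ 1 v) {M : ℝ}
    (hgM : ∀ x : E3, ‖g x‖ ≤ M) (x : E3) :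
    -(Df g v x) ≤ (1 / 2) * (N2 v x * (grad2 g x) ^ 2)
      + 11 * M ^ 2 * (grad2 g x * grad2 v x + N2 v x * hess2 g x) := by
  set a := grad2 g x with ha_def
  set b := hess2 g x with hb_def
  set Vx := N2 v x with hV_def
  set W := grad2 v x with hW_def
  set m2 := ∑ i : Fin 3, (gi g i x) ^ 2 with hm2_def
  set α := fun j : Fin 3 => pder j (N2 v) x with hα_def
  set β := fun j : Fin 3 => Qf g j x with hβ_def
  set γ := fun j : Fin 3 => pder j (grad2 g) x with hγ_def
  set S := Sf g x with hS_def
  set X1 := ∑ j : Fin 3, α j * β j with hX1_def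
  set X2 := ∑ j : Fin 3, γ j * β j with hX2_def
  have ha : 0 ≤ a := Finset.sum_nonneg fun i _ => Finset.sum_nonneg fun j _ => sq_nonneg _
  have hb : 0 ≤ b := Finset.sum_nonneg fun i _ => Finset.sum_nonneg fun j _ =>
    Finset.sum_nonneg fun k _ => sq_nonneg _
  have hV : 0 ≤ Vx := Finset.sum_nonneg fun i _ => sq_nonneg _
  have hW : 0 ≤ W := Finset.sum_nonneg fun i _ => Finset.sum_nonneg fun j _ => sq_nonneg _
  have hm2 : 0 ≤ m2 := Finset.sum_nonneg fun i _ => sq_nonneg _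
  have hm2M : m2 ≤ M ^ 2 := by
    have h1 : m2 = ‖g x‖ ^ 2 := (norm_sq_eq (g x)).symm
    rw [h1]
    exact pow_le_pow_left₀ (norm_nonneg _) (hgM x) 2
  -- decomposition of Df
  have hD : Df g v x = a * X1 + Vx * X2 + Vx * a * S := by
    have hterm : ∀ j ∈ Finset.univ, pder j (Pf g v) x * Qf g j x
        = a * (α j * β j) + Vx * (γ j * β j) := fun j _ => by
      rw [pder_Pf hg hv j x]
      show _ = a * (pder j (N2 v) x * Qf g j x) + Vx * (pder j (grad2 g) x * Qf g j x)
      rw [← ha_def, ← hV_def]; ring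
    simp only [Df]
    rw [Finset.sum_congr rfl hterm, Finset.sum_add_distrib, ← Finset.mul_sum, ← Finset.mul_sum]
    show a * X1 + Vx * X2 + (Vx * a) * S = _
    ring
  -- Cauchy-Schwarz bounds
  have hsumβ : (∑ j : Fin 3, (β j) ^ 2) ≤ m2 * a := by
    have hper : ∀ j : Fin 3, (β j) ^ 2 ≤ m2 * (∑ i : Fin 3, (dg g i j x) ^ 2) := fun j =>
      cs1 (fun i => gi g i x) (fun i => dg g i j x)
    calc (∑ j : Fin 3, (β j) ^ 2) ≤ ∑ j : Fin 3, m2 * (∑ i : Fin 3, (dg g i j x) ^ 2) :=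
          Finset.sum_le_sum fun j _ => hper j
      _ = m2 * a := by
          rw [← Finset.mul_sum, ha_def, grad2_eq, Finset.sum_comm]
  have hsumα : (∑ j : Fin 3, (α j) ^ 2) ≤ 4 * Vx * W := by
    have hper : ∀ j : Fin 3, (α j) ^ 2
        ≤ 4 * (Vx * (∑ i : Fin 3, (pder j (fun y => v y i) x) ^ 2)) := by
      intro j
      have hα2 : α j = 2 * ∑ i : Fin 3, v x i * pder j (fun y => v y i) x := by
        show pder j (N2 v) x = _
        rw [pder_N2 hv j x, Finset.mul_sum]
        exact Finset.sum_congr rfl fun i _ => by ring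
      rw [hα2, mul_pow]
      have hcs := cs1 (fun i => v x i) (fun i => pder j (fun y => v y i) x)
      have hVx' : Vx = ∑ i : Fin 3, (v x i) ^ 2 := hV_def
      rw [hVx']
      nlinarith [hcs]
    calc (∑ j : Fin 3, (α j) ^ 2)
        ≤ ∑ j : Fin 3, 4 * (Vx * (∑ i : Fin 3, (pder j (fun y => v y i) x) ^ 2)) :=
          Finset.sum_le_sum fun j _ => hper j
      _ = 4 * Vx * W := by
          simp only [← Finset.mul_sum]
          rw [show (∑ j : Fin 3, ∑ i : Fin 3, (pder j (fun y => v y i) x) ^ 2) = W from by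
            rw [hW_def]
            rw [show grad2 v x = ∑ i : Fin 3, ∑ j : Fin 3, (pder j (fun y => v y i) x) ^ 2
              from rfl]
            exact Finset.sum_comm]
          ring
  have hsumγ : (∑ j : Fin 3, (γ j) ^ 2) ≤ 4 * a * b := by
    have hper : ∀ j : Fin 3, (γ j) ^ 2
        ≤ 4 * (a * (∑ i : Fin 3, ∑ k : Fin 3, (ddg g i k j x) ^ 2)) := by
      intro j
      have hγ2 : γ j = 2 * ∑ i : Fin 3, ∑ k : Fin 3, dg g i k x * ddg g i k j x := by
        show pder j (grad2 g) x = _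
        rw [pder_grad2 hg j x, Finset.mul_sum]
        exact Finset.sum_congr rfl fun i _ => by
          rw [Finset.mul_sum]; exact Finset.sum_congr rfl fun k _ => by ring
      rw [hγ2, mul_pow]
      have hcs := cs2 (fun i k => dg g i k x) (fun i k => ddg g i k j x)
      have haa : a = ∑ i : Fin 3, ∑ k : Fin 3, (dg g i k x) ^ 2 := by
        rw [ha_def, grad2_eq]
      rw [haa]
      nlinarith [hcs]
    calc (∑ j : Fin 3, (γ j) ^ 2)
        ≤ ∑ j : Fin 3, 4 * (a * (∑ i : Fin 3, ∑ k : Fin 3, (ddg g i k j x) ^ 2)) :=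
          Finset.sum_le_sum fun j _ => hper j
      _ = 4 * a * b := by
          simp only [← Finset.mul_sum]
          have hperm : (∑ j : Fin 3, ∑ i : Fin 3, ∑ k : Fin 3, (ddg g i k j x) ^ 2) = b := by
            rw [hb_def, hess2_eq]
            rw [show (∑ j : Fin 3, ∑ i : Fin 3, ∑ k : Fin 3, (ddg g i k j x) ^ 2)
                = ∑ i : Fin 3, ∑ j : Fin 3, ∑ k : Fin 3, (ddg g i k j x) ^ 2 from
              Finset.sum_comm]
            exact Finset.sum_congr rfl fun i _ => Finset.sum_comm
          rw [hperm]; ring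
  have hSb : S ^ 2 ≤ 3 * m2 * b := by
    have hcs := cs2 (fun j i => gi g i x) (fun j i => ddg g i j j x)
    have h1 : (∑ j : Fin 3, ∑ i : Fin 3, (gi g i x) ^ 2) = 3 * m2 := by
      rw [Finset.sum_const, ← hm2_def]
      simp [Finset.card_univ]
      try ring
    have h2 : (∑ j : Fin 3, ∑ i : Fin 3, (ddg g i j j x) ^ 2) ≤ b := by
      rw [hb_def, hess2_eq]
      rw [show (∑ j : Fin 3, ∑ i : Fin 3, (ddg g i j j x) ^ 2)
          = ∑ i : Fin 3, ∑ j : Fin 3, (ddg g i j j x) ^ 2 from Finset.sum_comm]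
      refine Finset.sum_le_sum fun i _ => Finset.sum_le_sum fun j _ => ?_
      exact Finset.single_le_sum (fun k _ => sq_nonneg (ddg g i j k x)) (Finset.mem_univ j)
    have hS2 : S ^ 2 ≤ (∑ j : Fin 3, ∑ i : Fin 3, (gi g i x) ^ 2)
        * ∑ j : Fin 3, ∑ i : Fin 3, (ddg g i j j x) ^ 2 := hcs
    calc S ^ 2 ≤ (3 * m2) * ∑ j : Fin 3, ∑ i : Fin 3, (ddg g i j j x) ^ 2 := by
          rw [← h1]; exact hS2
      _ ≤ 3 * m2 * b := mul_le_mul_of_nonneg_left h2 (by linarith)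
  clear_value a b Vx W m2 α β γ S X1 X2
  clear ha_def hb_def hV_def hW_def hm2_def hα_def hβ_def hγ_def hS_def
  -- squared bounds for the three terms
  have hβnn : 0 ≤ ∑ j : Fin 3, (β j) ^ 2 := Finset.sum_nonneg fun j _ => sq_nonneg _
  have hX1sq : X1 ^ 2 ≤ (4 * Vx * W) * (m2 * a) := by
    calc X1 ^ 2 = (∑ j : Fin 3, α j * β j) ^ 2 := by rw [hX1_def]
      _ ≤ (∑ j : Fin 3, (α j) ^ 2) * ∑ j : Fin 3, (β j) ^ 2 := cs1 α β
      _ ≤ (4 * Vx * W) * (m2 * a) :=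
          mul_le_mul hsumα hsumβ hβnn (mul_nonneg (mul_nonneg (by norm_num) hV) hW)
  have hX2sq : X2 ^ 2 ≤ (4 * a * b) * (m2 * a) := by
    calc X2 ^ 2 = (∑ j : Fin 3, γ j * β j) ^ 2 := by rw [hX2_def]
      _ ≤ (∑ j : Fin 3, (γ j) ^ 2) * ∑ j : Fin 3, (β j) ^ 2 := cs1 γ β
      _ ≤ (4 * a * b) * (m2 * a) :=
          mul_le_mul hsumγ hsumβ hβnn (mul_nonneg (mul_nonneg (by norm_num) ha) hb)
  have y1 : -(a * X1) ≤ (Vx * a ^ 2) / 6 + (3 / 2) * (4 * M ^ 2 * W * a) := by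
    apply young_ineq (mul_nonneg hV (sq_nonneg a))
      (mul_nonneg (mul_nonneg (mul_nonneg (by norm_num) (sq_nonneg M)) hW) ha)
    calc (a * X1) ^ 2 = a ^ 2 * X1 ^ 2 := by ring
      _ ≤ a ^ 2 * ((4 * Vx * W) * (m2 * a)) := mul_le_mul_of_nonneg_left hX1sq (sq_nonneg a)
      _ = (4 * Vx * W * a ^ 3) * m2 := by ring
      _ ≤ (4 * Vx * W * a ^ 3) * M ^ 2 := mul_le_mul_of_nonneg_left hm2M
          (mul_nonneg (mul_nonneg (mul_nonneg (by norm_num) hV) hW) (pow_nonneg ha 3))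
      _ = (Vx * a ^ 2) * (4 * M ^ 2 * W * a) := by ring
  have y2 : -(Vx * X2) ≤ (Vx * a ^ 2) / 6 + (3 / 2) * (4 * M ^ 2 * Vx * b) := by
    apply young_ineq (mul_nonneg hV (sq_nonneg a))
      (mul_nonneg (mul_nonneg (mul_nonneg (by norm_num) (sq_nonneg M)) hV) hb)
    calc (Vx * X2) ^ 2 = Vx ^ 2 * X2 ^ 2 := by ring
      _ ≤ Vx ^ 2 * ((4 * a * b) * (m2 * a)) := mul_le_mul_of_nonneg_left hX2sq (sq_nonneg Vx)
      _ = (4 * Vx ^ 2 * a ^ 2 * b) * m2 := by ring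
      _ ≤ (4 * Vx ^ 2 * a ^ 2 * b) * M ^ 2 := mul_le_mul_of_nonneg_left hm2M
          (mul_nonneg (mul_nonneg (mul_nonneg (by norm_num) (sq_nonneg Vx)) (sq_nonneg a)) hb)
      _ = (Vx * a ^ 2) * (4 * M ^ 2 * Vx * b) := by ring
  have y3 : -(Vx * a * S) ≤ (Vx * a ^ 2) / 6 + (3 / 2) * (3 * M ^ 2 * Vx * b) := by
    apply young_ineq (mul_nonneg hV (sq_nonneg a))
      (mul_nonneg (mul_nonneg (mul_nonneg (by norm_num) (sq_nonneg M)) hV) hb)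
    calc (Vx * a * S) ^ 2 = (Vx ^ 2 * a ^ 2) * S ^ 2 := by ring
      _ ≤ (Vx ^ 2 * a ^ 2) * (3 * m2 * b) := mul_le_mul_of_nonneg_left hSb
          (mul_nonneg (sq_nonneg Vx) (sq_nonneg a))
      _ = (3 * Vx ^ 2 * a ^ 2 * b) * m2 := by ring
      _ ≤ (3 * Vx ^ 2 * a ^ 2 * b) * M ^ 2 := mul_le_mul_of_nonneg_left hm2M
          (mul_nonneg (mul_nonneg (mul_nonneg (by norm_num) (sq_nonneg Vx)) (sq_nonneg a)) hb)
      _ = (Vx * a ^ 2) * (3 * M ^ 2 * Vx * b) := by ring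
  rw [hD]
  have hWa : 0 ≤ M ^ 2 * (a * W) := mul_nonneg (sq_nonneg M) (mul_nonneg ha hW)
  have hVb : 0 ≤ M ^ 2 * (Vx * b) := mul_nonneg (sq_nonneg M) (mul_nonneg hV hb)
  nlinarith [y1, y2, y3, hWa, hVb]

end

noncomputable section
open Finset

end

/-- inequality (2.15): there is an absolute constant C > 0 such that for
every M ≥ 0, every C² compactly supported g : ℝ³ → ℝ³ with |g| ≤ M everywhere, and
every C¹ compactly supported v : ℝ³ → ℝ³,
∫ |v|² |∇g|⁴ ≤ C M² ∫ (|∇g|² |∇v|² + |v|² |∇²g|²). -/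
theorem mixed_fourth_power_bound :
    ∃ C : ℝ, 0 < C ∧ ∀ M : ℝ, 0 ≤ M →
      ∀ g : E3 → E3, ContDiff ℝ 2 g → HasCompactSupport g → (∀ x : E3, ‖g x‖ ≤ M) →
      ∀ v : E3 → E3, ContDiff ℝ 1 v → HasCompactSupport v →
        ∫ x, ‖v x‖ ^ 2 * (grad2 g x) ^ 2 ≤
          C * M ^ 2 * ∫ x, (grad2 g x * grad2 v x + ‖v x‖ ^ 2 * hess2 g x) := by
  refine ⟨22, by norm_num, ?_⟩
  intro M hM g hg hgcs hgM v hv hvcs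
  set K : Set E3 := tsupport g ∪ tsupport v with hK_def
  have hK : IsCompact K := hgcs.union hvcs
  have hKcl : IsClosed K := isClosed_closure.union isClosed_closure
  have hoffg : ∀ x : E3, x ∉ K → x ∉ tsupport g := fun x hx h => hx (Or.inl h)
  have hoffv : ∀ x : E3, x ∉ K → x ∉ tsupport v := fun x hx h => hx (Or.inr h)
  set e : E3 → ℝ := fun x => N2 v x * (grad2 g x) ^ 2 with he_def
  set Rr : E3 → ℝ := fun x => grad2 g x * grad2 v x + N2 v x * hess2 g x with hR_def
  -- continuity
  have he_cont : Continuous e := ((contDiff_N2 hv).continuous).mul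
    (((contDiff_grad2 hg).continuous).pow 2)
  have hR_cont : Continuous Rr := (((contDiff_grad2 hg).continuous).mul
    (continuous_grad2v hv)).add (((contDiff_N2 hv).continuous).mul (continuous_hess2 hg))
  have hSf_cont : Continuous (Sf g) :=
    continuous_finset_sum _ fun j _ => continuous_finset_sum _ fun i _ =>
      ((contDiff_gi hg i).continuous).mul (continuous_ddg hg i j j)
  have hD_cont : Continuous (Df g v) := by
    apply Continuous.add
    · exact continuous_finset_sum _ fun j _ =>
        ((contDiff_pder (n := 0) (by exact_mod_cast contDiff_Pf hg hv) j).continuous).mul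
          ((contDiff_Qf hg j).continuous)
    · exact ((contDiff_Pf hg hv).continuous).mul hSf_cont
  -- vanishing off K
  have hQ0 : ∀ x : E3, x ∉ K → ∀ j, Qf g j x = 0 := fun x hx j =>
    Finset.sum_eq_zero fun i _ => by rw [gi_eq_zero (hoffg x hx) i]; ring
  have hP0 : ∀ x : E3, x ∉ K → Pf g v x = 0 := fun x hx => by
    show N2 v x * grad2 g x = 0
    rw [N2_eq_zero (hoffv x hx)]; ring
  have hecs : HasCompactSupport e := HasCompactSupport.intro hK fun x hx => by
    show N2 v x * (grad2 g x) ^ 2 = 0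
    rw [N2_eq_zero (hoffv x hx)]; ring
  have hRcs : HasCompactSupport Rr := HasCompactSupport.intro hK fun x hx => by
    show grad2 g x * grad2 v x + N2 v x * hess2 g x = 0
    rw [N2_eq_zero (hoffv x hx), grad2_eq_zero (hoffg x hx)]; ring
  have hDcs : HasCompactSupport (Df g v) := HasCompactSupport.intro hK fun x hx => by
    show (∑ j : Fin 3, pder j (Pf g v) x * Qf g j x) + Pf g v x * Sf g x = 0
    rw [hP0 x hx, Finset.sum_eq_zero fun j _ => by rw [hQ0 x hx j]; ring]
    ring
  have hFcs : ∀ j, HasCompactSupport (Ff g v j) := fun j =>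
    HasCompactSupport.intro hK fun x hx => by
      show Pf g v x * Qf g j x = 0
      rw [hP0 x hx]; ring
  have htsF : ∀ j, tsupport (Ff g v j) ⊆ K := fun j =>
    closure_minimal (fun x hx => by
      by_contra hxK
      exact (Function.mem_support.1 hx) (by
        show Pf g v x * Qf g j x = 0
        rw [hP0 x hxK]; ring)) hKcl
  have hpFcs : ∀ j, HasCompactSupport (pder j (Ff g v j)) := fun j =>
    HasCompactSupport.intro hK fun x hx =>
      pder_eq_zero_of_nmem j fun hmem => hx (htsF j hmem)
  -- integrability
  have hInt_e : Integrable e := he_cont.integrable_of_hasCompactSupport hecs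
  have hInt_R : Integrable Rr := hR_cont.integrable_of_hasCompactSupport hRcs
  have hInt_D : Integrable (Df g v) := hD_cont.integrable_of_hasCompactSupport hDcs
  have hInt_pF : ∀ j, Integrable (pder j (Ff g v j)) := fun j =>
    ((contDiff_pder (n := 0) (by exact_mod_cast contDiff_Ff hg hv j) j).continuous
      ).integrable_of_hasCompactSupport (hpFcs j)
  -- the integration-by-parts identity
  have hzero : ∫ x, (∑ j : Fin 3, pder j (Ff g v j) x) = 0 := by
    rw [integral_finset_sum Finset.univ fun j _ => hInt_pF j]
    exact Finset.sum_eq_zero fun j _ =>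
      integral_pder_eq_zero (by exact_mod_cast contDiff_Ff hg hv j) (hFcs j) j
  have hsplit : (∫ x, e x) + ∫ x, Df g v x = 0 := by
    rw [← integral_add hInt_e hInt_D]
    rw [show (fun x => e x + Df g v x) = fun x => ∑ j : Fin 3, pder j (Ff g v j) x from
      funext fun x => (key_identity hg hv x).symm]
    exact hzero
  -- the pointwise bound, integrated
  have hmono : ∫ x, -(Df g v x) ≤ ∫ x, ((1 / 2) * e x + 11 * M ^ 2 * Rr x) := by
    apply integral_mono hInt_D.neg ((hInt_e.const_mul _).add (hInt_R.const_mul _))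
    intro x
    exact pointwise_bound hg hv hgM x
  rw [integral_neg, integral_add (hInt_e.const_mul _) (hInt_R.const_mul _),
    integral_const_mul, integral_const_mul] at hmono
  have hfinal : ∫ x, e x ≤ 22 * M ^ 2 * ∫ x, Rr x := by linarith
  -- convert to the statement's integrands
  have hL : (∫ x, ‖v x‖ ^ 2 * (grad2 g x) ^ 2) = ∫ x, e x := by
    congr 1
    funext x
    rw [he_def]
    show _ = N2 v x * (grad2 g x) ^ 2
    rw [norm_sq_eq (v x)]
    rfl
  have hR : (∫ x, (grad2 g x * grad2 v x + ‖v x‖ ^ 2 * hess2 g x)) = ∫ x, Rr x := by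
    congr 1
    funext x
    rw [hR_def]
    show _ = grad2 g x * grad2 v x + N2 v x * hess2 g x
    rw [norm_sq_eq (v x)]
    rfl
  rw [hL, hR]
  exact hfinal

end
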